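/- arXiv:1108.2849 — 4 statements merged into one kernel-verified Lean document; each statement's English description precedes it below -/
import Mathlib

section
/- Let n and k be integers with 0 ≤ k ≤ n ≤ d. Then the measure m(n, k, d) exists; that is, there exists a positive Borel measure μ on P̄_d such that for every s ∈ P_d, ∫ exp(−tr(s x)) μ(dx) = (det s)^{−n/2} · exp(tr(s^{−1} I(k,d))). -/
open MeasureTheory Matrix

noncomputable instance matrixMS (m n R : Type*) [TopologicalSpace R] :
    MeasurableSpace (Matrix m n R) := borel _

instance matrixBS (m n R : Type*) [TopologicalSpace R] :
    BorelSpace (Matrix m n R) := ⟨rfl⟩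

/-- The diagonal matrix `I(k,d)` whose first `d-k` diagonal entries are `0` and whose
last `k` diagonal entries are `1`. -/
def Idiag (d k : ℕ) : Matrix (Fin d) (Fin d) ℝ :=
  Matrix.diagonal fun i => if (i : ℕ) < d - k then 0 else 1

/-- `μ` is a version of the measure `m(2p, k, d)`: a (positive Borel) measure carried by the
closed cone of positive semidefinite matrices whose Laplace transform at every positive
definite `s` equals `(det s)^(-p) · exp (tr (s⁻¹ I(k,d)))`. -/
def IsWishartM (d : ℕ) (p : ℝ) (k : ℕ) (μ : Measure (Matrix (Fin d) (Fin d) ℝ)) : Prop :=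
  μ {x | ¬ x.PosSemidef} = 0 ∧
  ∀ s : Matrix (Fin d) (Fin d) ℝ, s.PosDef →
    ∫⁻ x, ENNReal.ofReal (Real.exp (-(s * x).trace)) ∂μ
      = ENNReal.ofReal (s.det ^ (-p) * Real.exp ((s⁻¹ * Idiag d k).trace))

/-- `P` is a version of the non-central Wishart distribution `NCW(2p, w, Σ)`. -/
def IsNCW (d : ℕ) (p : ℝ) (w Sg : Matrix (Fin d) (Fin d) ℝ)
    (P : Measure (Matrix (Fin d) (Fin d) ℝ)) : Prop :=
  IsProbabilityMeasure P ∧ P {x | ¬ x.PosSemidef} = 0 ∧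
  ∀ s : Matrix (Fin d) (Fin d) ℝ, s.PosDef →
    ∫⁻ x, ENNReal.ofReal (Real.exp (-(s * x).trace)) ∂P
      = ENNReal.ofReal ((1 + (2 : ℝ) • (Sg * s)).det ^ (-p) *
          Real.exp (-(((2 : ℝ) • s) * (1 + (2 : ℝ) • (Sg * s))⁻¹ * w).trace))

/-- The set `Λ_d = {1/2, 2/2, …, (d-2)/2} ∪ [(d-1)/2, ∞)`. -/
def Lambda (d : ℕ) : Set ℝ :=
  {p | ∃ j : ℕ, 1 ≤ j ∧ j ≤ d - 2 ∧ p = (j : ℝ) / 2} ∪ Set.Ici (((d : ℝ) - 1) / 2)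

open Real in
lemma gauss_std_int (d : ℕ) :
    Integrable (fun v : Fin d → ℝ => Real.exp (-(v ⬝ᵥ v))) := by
  have h : (fun v : Fin d → ℝ => Real.exp (-(v ⬝ᵥ v)))
      = fun v => ∏ i, Real.exp (-(1:ℝ) * (v i) ^ 2) := by
    funext v
    rw [← Real.exp_sum]
    congr 1
    simp [dotProduct, Finset.sum_neg_distrib, pow_two]
  rw [h]
  exact Integrable.fintype_prod fun i => integrable_exp_neg_mul_sq one_pos

open Real in
lemma gauss_std_val (d : ℕ) :
    ∫ v : Fin d → ℝ, Real.exp (-(v ⬝ᵥ v)) = (Real.sqrt π) ^ d := by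
  have h : (fun v : Fin d → ℝ => Real.exp (-(v ⬝ᵥ v)))
      = fun v => ∏ i, Real.exp (-(1:ℝ) * (v i) ^ 2) := by
    funext v
    rw [← Real.exp_sum]
    congr 1
    simp [dotProduct, Finset.sum_neg_distrib, pow_two]
  rw [h, MeasureTheory.integral_fintype_prod_volume_eq_pow
    (fun t : ℝ => Real.exp (-(1:ℝ) * t ^ 2)), integral_gaussian]
  simp

open scoped MatrixOrder in
open Real in
lemma gauss_quad (d : ℕ) {s : Matrix (Fin d) (Fin d) ℝ} (hs : s.PosDef) :
    Integrable (fun u : Fin d → ℝ => Real.exp (-(u ⬝ᵥ s *ᵥ u))) ∧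
    ∫ u : Fin d → ℝ, Real.exp (-(u ⬝ᵥ s *ᵥ u))
      = (Real.sqrt π) ^ d * (Real.sqrt s.det)⁻¹ := by
  classical
  set B := CFC.sqrt s with hBdef
  have hBB : B * B = s := CFC.sqrt_mul_sqrt_self s hs.posSemidef.nonneg
  have hPS : B.PosSemidef := (CFC.sqrt_nonneg s).posSemidef
  have hBsymm : Bᵀ = B := by
    have h1 : Bᴴ = B := hPS.1
    rwa [Matrix.conjTranspose_eq_transpose_of_trivial] at h1
  have hBdnn : (0:ℝ) ≤ B.det := by
    rw [hPS.1.det_eq_prod_eigenvalues]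
    exact Finset.prod_nonneg fun i _ => hPS.eigenvalues_nonneg i
  have hdet : B.det * B.det = s.det := by rw [← Matrix.det_mul, hBB]
  have hds : (0:ℝ) < s.det := hs.det_pos
  have hBd : B.det ≠ 0 := by
    intro h; rw [h, mul_zero] at hdet; exact hds.ne' hdet.symm
  have hsqrt : Real.sqrt s.det = B.det := by rw [← hdet, Real.sqrt_mul_self hBdnn]
  set T := Matrix.toLin' B with hTdef
  have hmap : Measure.map T volume = ENNReal.ofReal |B.det⁻¹| • volume :=
    Real.map_matrix_volume_pi_eq_smul_volume_pi hBd
  have hTc : Continuous T := LinearMap.continuous_on_pi _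
  have hcomp : ∀ u : Fin d → ℝ, (T u) ⬝ᵥ (T u) = u ⬝ᵥ s *ᵥ u := by
    intro u
    have hTu : T u = B *ᵥ u := Matrix.toLin'_apply B u
    rw [hTu, Matrix.dotProduct_mulVec, ← Matrix.mulVec_transpose, hBsymm,
      Matrix.mulVec_mulVec, hBB]
    exact dotProduct_comm _ _
  have hgm : Continuous (fun v : Fin d → ℝ => Real.exp (-(v ⬝ᵥ v))) := by
    apply Real.continuous_exp.comp
    apply Continuous.neg
    exact continuous_finset_sum _ fun j _ => (continuous_apply j).mul (continuous_apply j)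
  have hg_int' : Integrable (fun v : Fin d → ℝ => Real.exp (-(v ⬝ᵥ v)))
      (Measure.map T volume) := by
    rw [hmap]
    exact (gauss_std_int d).smul_measure ENNReal.ofReal_ne_top
  have hint : Integrable (fun u : Fin d → ℝ => Real.exp (-(u ⬝ᵥ s *ᵥ u))) := by
    have := (integrable_map_measure hgm.aestronglyMeasurable hTc.measurable.aemeasurable).1 hg_int'
    refine this.congr (Filter.Eventually.of_forall fun u => ?_)
    simp [Function.comp, hcomp u]
  refine ⟨hint, ?_⟩
  calc ∫ u : Fin d → ℝ, Real.exp (-(u ⬝ᵥ s *ᵥ u))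
      = ∫ u : Fin d → ℝ, Real.exp (-((T u) ⬝ᵥ (T u))) := by
        refine integral_congr_ae (Filter.Eventually.of_forall fun u => ?_)
        simp only []
        rw [hcomp u]
    _ = ∫ v : Fin d → ℝ, Real.exp (-(v ⬝ᵥ v)) ∂(Measure.map T volume) :=
        (integral_map hTc.measurable.aemeasurable hgm.aestronglyMeasurable).symm
    _ = (ENNReal.ofReal |B.det⁻¹|).toReal • ∫ v : Fin d → ℝ, Real.exp (-(v ⬝ᵥ v)) := by
        rw [hmap, integral_smul_measure]
    _ = (Real.sqrt π) ^ d * (Real.sqrt s.det)⁻¹ := by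
        rw [gauss_std_val, ENNReal.toReal_ofReal (by positivity), hsqrt,
          abs_of_nonneg (inv_nonneg.2 hBdnn), smul_eq_mul, mul_comm]

open Real in
lemma gauss_lin (d : ℕ) {s : Matrix (Fin d) (Fin d) ℝ} (hs : s.PosDef) (a : Fin d → ℝ) :
    Integrable (fun y : Fin d → ℝ => Real.exp (-(y ⬝ᵥ s *ᵥ y) + 2 * (a ⬝ᵥ y))) ∧
    ∫ y : Fin d → ℝ, Real.exp (-(y ⬝ᵥ s *ᵥ y) + 2 * (a ⬝ᵥ y))
      = (Real.sqrt π) ^ d * (Real.sqrt s.det)⁻¹ * Real.exp (a ⬝ᵥ s⁻¹ *ᵥ a) := by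
  classical
  obtain ⟨hint0, hval0⟩ := gauss_quad d hs
  have hssymm : sᵀ = s := by
    have h1 : sᴴ = s := hs.1
    rwa [Matrix.conjTranspose_eq_transpose_of_trivial] at h1
  set m : Fin d → ℝ := s⁻¹ *ᵥ a with hmdef
  have hsm : s *ᵥ m = a := by
    rw [hmdef, Matrix.mulVec_mulVec, Matrix.mul_nonsing_inv _ hs.det_pos.ne'.isUnit,
      Matrix.one_mulVec]
  have hexp : ∀ u : Fin d → ℝ,
      -((u + m) ⬝ᵥ s *ᵥ (u + m)) + 2 * (a ⬝ᵥ (u + m))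
        = -(u ⬝ᵥ s *ᵥ u) + (a ⬝ᵥ m) := by
    intro u
    have h1 : m ⬝ᵥ s *ᵥ u = u ⬝ᵥ a := by
      rw [Matrix.dotProduct_mulVec, ← Matrix.mulVec_transpose, hssymm, hsm]
      exact dotProduct_comm _ _
    have h2 : u ⬝ᵥ s *ᵥ m = u ⬝ᵥ a := by rw [hsm]
    have h3 : m ⬝ᵥ s *ᵥ m = a ⬝ᵥ m := by rw [hsm]; exact dotProduct_comm _ _
    rw [Matrix.mulVec_add, add_dotProduct, dotProduct_add,
      dotProduct_add, dotProduct_add, h1, h2, h3]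
    have h4 : a ⬝ᵥ u = u ⬝ᵥ a := dotProduct_comm _ _
    rw [h4]
    ring
  have hfun : (fun y : Fin d → ℝ => Real.exp (-(y ⬝ᵥ s *ᵥ y) + 2 * (a ⬝ᵥ y)))
      = fun y => Real.exp (a ⬝ᵥ m) * Real.exp (-((y - m) ⬝ᵥ s *ᵥ (y - m))) := by
    funext y
    have := hexp (y - m)
    rw [sub_add_cancel] at this
    rw [this, Real.exp_add, mul_comm]
  constructor
  · rw [hfun]
    exact ((hint0.comp_sub_right m).const_mul _)
  · rw [hfun, MeasureTheory.integral_const_mul]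
    have : ∫ y : Fin d → ℝ, Real.exp (-((y - m) ⬝ᵥ s *ᵥ (y - m)))
        = ∫ y : Fin d → ℝ, Real.exp (-(y ⬝ᵥ s *ᵥ y)) := by
      have := MeasureTheory.integral_add_right_eq_self
        (μ := (volume : Measure (Fin d → ℝ)))
        (fun y : Fin d → ℝ => Real.exp (-((y - m) ⬝ᵥ s *ᵥ (y - m)))) m
      rw [← this]
      refine integral_congr_ae (Filter.Eventually.of_forall fun y => ?_)
      simp [add_sub_cancel_right]
    rw [this, hval0]
    ring

def aaVec (d k n : ℕ) : Fin n → Fin d → ℝ :=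
  fun i j => if (j : ℕ) + k = d + (i : ℕ) then 1 else 0

lemma sum_dot {d n k : ℕ} (hkn : k ≤ n) (hnd : n ≤ d)
    (M : Matrix (Fin d) (Fin d) ℝ) :
    ∑ i : Fin n, (aaVec d k n i) ⬝ᵥ M *ᵥ (aaVec d k n i) = (M * Idiag d k).trace := by
  classical
  have hkd : k ≤ d := hkn.trans hnd
  have key : ∀ i : Fin n, (aaVec d k n i) ⬝ᵥ M *ᵥ (aaVec d k n i)
      = ∑ j : Fin d, if (j : ℕ) + k = d + (i : ℕ) then M j j else 0 := by
    intro i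
    by_cases h : (i : ℕ) < k
    · set j₀ : Fin d := ⟨d - k + (i : ℕ), by omega⟩ with hj₀
      have hcond : ∀ j : Fin d, ((j : ℕ) + k = d + (i : ℕ)) ↔ j = j₀ := by
        intro j
        constructor
        · intro hh; apply Fin.ext; simp [hj₀]; omega
        · intro hh; subst hh; simp [hj₀]; omega
      have ha : aaVec d k n i = Pi.single j₀ 1 := by
        funext j
        rw [aaVec, Pi.single_apply]
        by_cases hj : j = j₀
        · simp [hj, (hcond j₀).2 rfl]
        · rw [if_neg (fun hh => hj ((hcond j).1 hh)), if_neg hj]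
      rw [ha, Matrix.mulVec_single, single_dotProduct]
      rw [Finset.sum_congr rfl (fun j _ => if_congr (hcond j) rfl rfl)]
      simp [Finset.sum_ite_eq']
    · have ha : aaVec d k n i = 0 := by
        funext j
        rw [aaVec]
        rw [if_neg (by omega)]
        rfl
      rw [ha, zero_dotProduct]
      symm
      refine Finset.sum_eq_zero fun j _ => if_neg (by omega)
  rw [Finset.sum_congr rfl fun i _ => key i, Finset.sum_comm]
  rw [Matrix.trace]
  refine Finset.sum_congr rfl fun j _ => ?_
  rw [Matrix.diag]
  rw [show (M * Idiag d k) j j = M j j * (if (j : ℕ) < d - k then 0 else 1) from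
    Matrix.mul_diagonal _ _ _ _]
  by_cases hj : (j : ℕ) < d - k
  · rw [if_pos hj, mul_zero]
    refine Finset.sum_eq_zero fun i _ => if_neg (by omega)
  · rw [if_neg hj, mul_one]
    set i₀ : Fin n := ⟨(j : ℕ) + k - d, by omega⟩ with hi₀
    have hcond : ∀ i : Fin n, ((j : ℕ) + k = d + (i : ℕ)) ↔ i = i₀ := by
      intro i
      constructor
      · intro hh; apply Fin.ext; simp [hi₀]; omega
      · intro hh; subst hh; simp [hi₀]; omega
    rw [Finset.sum_congr rfl (fun i _ => if_congr (hcond i) rfl rfl)]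
    simp [Finset.sum_ite_eq']

theorem stmt1 (d n k : ℕ) (hkn : k ≤ n) (hnd : n ≤ d) :
    ∃ μ, IsWishartM d ((n : ℝ) / 2) k μ := by
  classical
  set a := aaVec d k n with hadef
  set f : (Fin n → Fin d → ℝ) → Matrix (Fin d) (Fin d) ℝ :=
    fun z => Matrix.of fun p q => ∑ i, z i p * z i q with hfdef
  have hfc : Continuous f := by
    apply continuous_matrix
    intro p q
    simp only [hfdef, Matrix.of_apply]
    exact continuous_finset_sum _ fun i _ =>
      (continuous_apply_apply i p).mul
        (continuous_apply_apply i q)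
  have hfm : Measurable f := hfc.measurable
  set c : ℝ := ((Real.sqrt Real.pi) ^ d)⁻¹ with hcdef
  have hc0 : (0:ℝ) < (Real.sqrt Real.pi) ^ d := by positivity
  set gr : (Fin n → Fin d → ℝ) → ℝ :=
    fun z => ∏ i, c * Real.exp (2 * (a i ⬝ᵥ z i)) with hgrdef
  have hgrc : Continuous gr := by
    refine continuous_finset_prod _ fun i _ => continuous_const.mul ?_
    refine Real.continuous_exp.comp (continuous_const.mul ?_)
    exact continuous_finset_sum _ fun j _ =>
      continuous_const.mul ((continuous_apply j).comp (continuous_apply i))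
  set gden : (Fin n → Fin d → ℝ) → ENNReal := fun z => ENNReal.ofReal (gr z) with hgdef
  have hgm : Measurable gden := (ENNReal.continuous_ofReal.comp hgrc).measurable
  refine ⟨Measure.map f (volume.withDensity gden), ?_, ?_⟩
  · have hclosed : IsClosed {x : Matrix (Fin d) (Fin d) ℝ | x.PosSemidef} := by
      have hset : {x : Matrix (Fin d) (Fin d) ℝ | x.PosSemidef}
          = {x : Matrix (Fin d) (Fin d) ℝ | xᴴ = x} ∩
            ⋂ v : Fin d → ℝ, {x | 0 ≤ star v ⬝ᵥ x *ᵥ v} := by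
        ext x
        simp only [Set.mem_setOf_eq, Set.mem_inter_iff, Set.mem_iInter,
          Matrix.posSemidef_iff_dotProduct_mulVec, Matrix.IsHermitian]
      rw [hset]
      refine IsClosed.inter (isClosed_eq continuous_id.matrix_conjTranspose continuous_id)
        (isClosed_iInter fun v => ?_)
      refine isClosed_le continuous_const ?_
      have : Continuous fun x : Matrix (Fin d) (Fin d) ℝ => star v ⬝ᵥ x *ᵥ v := by
        simp only [dotProduct, Matrix.mulVec]
        refine continuous_finset_sum _ fun p _ => continuous_const.mul ?_
        exact continuous_finset_sum _ fun q _ =>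
          (continuous_id.matrix_elem p q).mul continuous_const
      exact this
    have hS : MeasurableSet {x : Matrix (Fin d) (Fin d) ℝ | ¬ x.PosSemidef} := by
      have : {x : Matrix (Fin d) (Fin d) ℝ | ¬ x.PosSemidef}
          = {x : Matrix (Fin d) (Fin d) ℝ | x.PosSemidef}ᶜ := rfl
      rw [this]
      exact hclosed.measurableSet.compl
    rw [Measure.map_apply hfm hS]
    have hempty : f ⁻¹' {x : Matrix (Fin d) (Fin d) ℝ | ¬ x.PosSemidef} = ∅ := by
      refine Set.eq_empty_iff_forall_notMem.2 fun z hz => ?_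
      refine hz ?_
      have : f z = (Matrix.of fun (i : Fin n) (p : Fin d) => z i p)ᴴ *
          (Matrix.of fun (i : Fin n) (p : Fin d) => z i p) := by
        ext p q
        simp [hfdef, Matrix.mul_apply, Matrix.conjTranspose_apply, mul_comm]
      rw [this]
      exact Matrix.posSemidef_conjTranspose_mul_self _
    rw [hempty, measure_empty]
  · intro s hs
    have hFc : Continuous fun x : Matrix (Fin d) (Fin d) ℝ =>
        ENNReal.ofReal (Real.exp (-(s * x).trace)) :=
      ENNReal.continuous_ofReal.comp (Real.continuous_exp.comp
        ((continuous_const.matrix_mul continuous_id).matrix_trace).neg)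
    have hGm : Measurable fun z : Fin n → Fin d → ℝ =>
        ENNReal.ofReal (Real.exp (-(s * f z).trace)) := hFc.measurable.comp hfm
    rw [MeasureTheory.lintegral_map hFc.measurable hfm,
      MeasureTheory.lintegral_withDensity_eq_lintegral_mul _ hgm hGm]
    have htr : ∀ z : Fin n → Fin d → ℝ, (s * f z).trace = ∑ i, (z i) ⬝ᵥ s *ᵥ (z i) := by
      intro z
      have h1 : ∀ p : Fin d, (s * f z) p p = ∑ i : Fin n, z i p * (s *ᵥ z i) p := by
        intro p
        simp only [Matrix.mul_apply, hfdef, Matrix.of_apply, Matrix.mulVec,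
          dotProduct, Finset.mul_sum]
        rw [Finset.sum_comm]
        exact Finset.sum_congr rfl fun i _ => Finset.sum_congr rfl fun q _ => by ring
      rw [Matrix.trace]
      simp only [Matrix.diag]
      rw [Finset.sum_congr rfl fun p _ => h1 p, Finset.sum_comm]
      rfl
    have hpt : ∀ z : Fin n → Fin d → ℝ,
        (gden * fun z => ENNReal.ofReal (Real.exp (-(s * f z).trace))) z
          = ENNReal.ofReal
              (∏ i, c * Real.exp (-(z i ⬝ᵥ s *ᵥ z i) + 2 * (a i ⬝ᵥ z i))) := by
      intro z
      simp only [Pi.mul_apply, hgdef]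
      rw [← ENNReal.ofReal_mul (by positivity)]
      congr 1
      rw [htr z]
      have h1 : ∀ i : Fin n, c * Real.exp (-(z i ⬝ᵥ s *ᵥ z i) + 2 * (a i ⬝ᵥ z i))
          = (c * Real.exp (2 * (a i ⬝ᵥ z i))) * Real.exp (-(z i ⬝ᵥ s *ᵥ z i)) := by
        intro i; rw [Real.exp_add]; ring
      rw [Finset.prod_congr rfl fun i _ => h1 i, Finset.prod_mul_distrib, ← Real.exp_sum]
      rw [hgrdef]
      congr 2
      rw [← Finset.sum_neg_distrib]
    rw [lintegral_congr hpt]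
    have hInt : Integrable (fun z : Fin n → Fin d → ℝ =>
        ∏ i, c * Real.exp (-(z i ⬝ᵥ s *ᵥ z i) + 2 * (a i ⬝ᵥ z i))) :=
      Integrable.fintype_prod fun i => ((gauss_lin d hs (a i)).1.const_mul c)
    rw [← MeasureTheory.ofReal_integral_eq_lintegral_ofReal hInt
      (Filter.Eventually.of_forall fun z => Finset.prod_nonneg fun i _ => by positivity)]
    rw [MeasureTheory.integral_fintype_prod_volume_eq_prod
      (f := fun (i : Fin n) (y : Fin d → ℝ) =>
        c * Real.exp (-(y ⬝ᵥ s *ᵥ y) + 2 * (a i ⬝ᵥ y)))]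
    congr 1
    have hfac : ∀ i : Fin n,
        ∫ y : Fin d → ℝ, c * Real.exp (-(y ⬝ᵥ s *ᵥ y) + 2 * (a i ⬝ᵥ y))
          = (Real.sqrt s.det)⁻¹ * Real.exp (a i ⬝ᵥ s⁻¹ *ᵥ a i) := by
      intro i
      rw [MeasureTheory.integral_const_mul, (gauss_lin d hs (a i)).2, hcdef]
      field_simp
    rw [Finset.prod_congr rfl fun i _ => hfac i, Finset.prod_mul_distrib,
      Finset.prod_const, ← Real.exp_sum, Finset.card_univ, Fintype.card_fin]
    have hsum : ∑ i : Fin n, a i ⬝ᵥ s⁻¹ *ᵥ a i = (s⁻¹ * Idiag d k).trace := by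
      rw [hadef]; exact sum_dot hkn hnd s⁻¹
    rw [hsum]
    congr 1
    have hds : (0:ℝ) < s.det := hs.det_pos
    rw [← Real.rpow_natCast ((Real.sqrt s.det)⁻¹) n, Real.sqrt_eq_rpow,
      ← Real.rpow_neg hds.le, ← Real.rpow_mul hds.le]
    congr 1
    ring
end

section
/- Let d ≥ 3. If the measure m(d−2, d, d) does not exist, then for every integer n with 0 ≤ n ≤ d−2 the measure m(n, d, d) does not exist. -/
open MeasureTheory Matrix

lemma isClosed_posSemidef (d : ℕ) :
    IsClosed {x : Matrix (Fin d) (Fin d) ℝ | x.PosSemidef} := by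
  have hset : {x : Matrix (Fin d) (Fin d) ℝ | x.PosSemidef}
      = {x : Matrix (Fin d) (Fin d) ℝ | xᴴ = x} ∩
        ⋂ v : Fin d → ℝ, {x | 0 ≤ star v ⬝ᵥ x *ᵥ v} := by
    ext x
    simp only [Set.mem_setOf_eq, Set.mem_inter_iff, Set.mem_iInter]
    exact posSemidef_iff_dotProduct_mulVec
  rw [hset]
  refine IsClosed.inter (isClosed_eq (continuous_id.matrix_conjTranspose) continuous_id)
    (isClosed_iInter fun v => isClosed_le continuous_const ?_)
  exact Continuous.dotProduct continuous_const
    (continuous_id.matrix_mulVec continuous_const)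

lemma measurable_laplace_kernel (d : ℕ) (s : Matrix (Fin d) (Fin d) ℝ) :
    Measurable fun x : Matrix (Fin d) (Fin d) ℝ =>
      ENNReal.ofReal (Real.exp (-(s * x).trace)) := by
  apply ENNReal.measurable_ofReal.comp
  apply Continuous.measurable
  exact Real.continuous_exp.comp ((continuous_const.matrix_mul continuous_id).matrix_trace).neg

lemma posSemidef_vecMulVec' {d : ℕ} (v : Fin d → ℝ) : (vecMulVec v v).PosSemidef := by
  rw [posSemidef_iff_dotProduct_mulVec]
  constructor
  · ext i j
    simp [vecMulVec_apply, conjTranspose_apply, mul_comm]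
  · intro x
    have hkey : star x ⬝ᵥ (vecMulVec v v) *ᵥ x = (v ⬝ᵥ x) * (v ⬝ᵥ x) := by
      calc star x ⬝ᵥ (vecMulVec v v) *ᵥ x
          = ∑ i, ∑ j, x i * ((v i * v j) * x j) := by
            simp [dotProduct, Matrix.mulVec, Matrix.vecMulVec_apply, Finset.mul_sum]
        _ = ∑ i, ∑ j, (v i * x i) * (v j * x j) := by
            exact Finset.sum_congr rfl fun i _ => Finset.sum_congr rfl fun j _ => by ring
        _ = (v ⬝ᵥ x) * (v ⬝ᵥ x) := by
            rw [dotProduct, Finset.sum_mul_sum]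
    rw [hkey]
    exact mul_self_nonneg _

lemma trace_mul_vecMulVec {d : ℕ} (s : Matrix (Fin d) (Fin d) ℝ) (v : Fin d → ℝ) :
    (s * vecMulVec v v).trace = v ⬝ᵥ s *ᵥ v := by
  simp only [Matrix.trace, Matrix.diag_apply, Matrix.mul_apply, Matrix.vecMulVec_apply,
    dotProduct, Matrix.mulVec, Finset.mul_sum]
  exact Finset.sum_congr rfl fun i _ => Finset.sum_congr rfl fun k _ => by ring

lemma gaussian_I0 (d : ℕ) :
    ∫⁻ u : Fin d → ℝ, ENNReal.ofReal (Real.exp (-(u ⬝ᵥ u)))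
      = ENNReal.ofReal (Real.pi ^ ((d : ℝ) / 2)) := by
  have hg : Measurable fun u : Fin d → ℝ => ENNReal.ofReal (Real.exp (-(u ⬝ᵥ u))) := by
    apply ENNReal.measurable_ofReal.comp
    apply Continuous.measurable
    exact Real.continuous_exp.comp ((continuous_id.dotProduct continuous_id).neg)
  have hmp := EuclideanSpace.volume_preserving_symm_measurableEquiv_toLp (Fin d)
  rw [← hmp.lintegral_comp hg]
  have hdot : ∀ w : EuclideanSpace ℝ (Fin d),
      ((MeasurableEquiv.toLp 2 (Fin d → ℝ)).symm w ⬝ᵥ (MeasurableEquiv.toLp 2 (Fin d → ℝ)).symm w)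
        = (1 : ℝ) * ‖w‖ ^ 2 := by
    intro w
    rw [EuclideanSpace.norm_eq, one_mul, Real.sq_sqrt (by positivity)]
    simp [dotProduct, Real.norm_eq_abs, sq_abs, sq]
  have hInt : Integrable (fun w : EuclideanSpace ℝ (Fin d) => Real.exp (-1 * ‖w‖ ^ 2)) := by
    have h1 := (GaussianFourier.integrable_cexp_neg_mul_sq_norm_add
      (V := EuclideanSpace ℝ (Fin d)) (b := 1) (by norm_num) 0 0).norm
    apply h1.congr
    filter_upwards with w
    simp [Complex.norm_exp]
    norm_cast
  calc ∫⁻ w : EuclideanSpace ℝ (Fin d),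
        ENNReal.ofReal (Real.exp (-((MeasurableEquiv.toLp 2 (Fin d → ℝ)).symm w ⬝ᵥ
          (MeasurableEquiv.toLp 2 (Fin d → ℝ)).symm w)))
      = ∫⁻ w : EuclideanSpace ℝ (Fin d), ENNReal.ofReal (Real.exp (-1 * ‖w‖ ^ 2)) := by
        refine lintegral_congr fun w => ?_
        rw [hdot w]; ring_nf
    _ = ENNReal.ofReal (∫ w : EuclideanSpace ℝ (Fin d), Real.exp (-1 * ‖w‖ ^ 2)) :=
        (ofReal_integral_eq_lintegral_ofReal hInt
          (Filter.Eventually.of_forall fun w => (Real.exp_pos _).le)).symm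
    _ = ENNReal.ofReal (Real.pi ^ ((d : ℝ) / 2)) := by
        rw [show (fun w : EuclideanSpace ℝ (Fin d) => Real.exp (-1 * ‖w‖ ^ 2))
            = fun w => Real.exp (-(1:ℝ) * ‖w‖ ^ 2) by norm_num]
        rw [GaussianFourier.integral_rexp_neg_mul_sq_norm one_pos]
        rw [finrank_euclideanSpace_fin]
        norm_num

open scoped MatrixOrder in
lemma gaussian_lintegral {d : ℕ} {s : Matrix (Fin d) (Fin d) ℝ} (hs : s.PosDef) :
    ∫⁻ v : Fin d → ℝ, ENNReal.ofReal (Real.exp (-(v ⬝ᵥ s *ᵥ v)))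
      = ENNReal.ofReal (Real.pi ^ ((d : ℝ) / 2) * s.det ^ (-(1 : ℝ) / 2)) := by
  classical
  set A := CFC.sqrt s with hA
  have hAs : A * A = s := CFC.sqrt_mul_sqrt_self s hs.posSemidef.nonneg
  have hAherm : Aᴴ = A := (CFC.sqrt_nonneg s).posSemidef.1
  have hAT : Aᵀ = A := by
    ext i j
    have h2 := congrFun (congrFun hAherm i) j
    simp only [conjTranspose_apply, star_trivial] at h2
    simpa [Matrix.transpose_apply] using h2
  have hdet2 : A.det * A.det = s.det := by rw [← det_mul, hAs]
  have hdetne : A.det ≠ 0 := by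
    intro h0
    rw [h0, mul_zero] at hdet2
    exact hs.det_pos.ne' hdet2.symm
  have hquad : ∀ v : Fin d → ℝ, v ⬝ᵥ s *ᵥ v = (A *ᵥ v) ⬝ᵥ (A *ᵥ v) := by
    intro v
    rw [← hAs, ← Matrix.mulVec_mulVec, dotProduct_mulVec]
    congr 1
    conv_lhs => rw [← hAT]
    rw [Matrix.vecMul_transpose]
  have hg : Measurable fun u : Fin d → ℝ => ENNReal.ofReal (Real.exp (-(u ⬝ᵥ u))) := by
    apply ENNReal.measurable_ofReal.comp
    apply Continuous.measurable
    exact Real.continuous_exp.comp ((continuous_id.dotProduct continuous_id).neg)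
  have hmap := Real.map_matrix_volume_pi_eq_smul_volume_pi (M := A) hdetne
  have hTlin : Measurable (Matrix.toLin' A) := (LinearMap.continuous_on_pi _).measurable
  have habs : |A.det|⁻¹ = s.det ^ (-(1 : ℝ) / 2) := by
    have h1 : |A.det| = Real.sqrt s.det := by
      rw [← hdet2, Real.sqrt_mul_self_eq_abs]
    rw [h1, Real.sqrt_eq_rpow, neg_div, Real.rpow_neg hs.det_pos.le]
  calc ∫⁻ v : Fin d → ℝ, ENNReal.ofReal (Real.exp (-(v ⬝ᵥ s *ᵥ v)))
      = ∫⁻ v : Fin d → ℝ, (fun u : Fin d → ℝ => ENNReal.ofReal (Real.exp (-(u ⬝ᵥ u))))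
          (Matrix.toLin' A v) := by
        refine lintegral_congr fun v => ?_
        simp only [Matrix.toLin'_apply]
        rw [hquad v]
    _ = ∫⁻ u, ENNReal.ofReal (Real.exp (-(u ⬝ᵥ u)))
          ∂(Measure.map (Matrix.toLin' A) volume) := (lintegral_map hg hTlin).symm
    _ = ENNReal.ofReal |A.det|⁻¹ * ∫⁻ u : Fin d → ℝ, ENNReal.ofReal (Real.exp (-(u ⬝ᵥ u))) := by
        rw [hmap, lintegral_smul_measure]
        congr 1
        rw [abs_inv]
    _ = ENNReal.ofReal (Real.pi ^ ((d : ℝ) / 2) * s.det ^ (-(1 : ℝ) / 2)) := by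
        rw [gaussian_I0 d, habs, ← ENNReal.ofReal_mul (Real.rpow_nonneg hs.det_pos.le _), mul_comm]

noncomputable def rho (d : ℕ) : Measure (Matrix (Fin d) (Fin d) ℝ) :=
  (ENNReal.ofReal (Real.pi ^ (-(d : ℝ) / 2))) •
    Measure.map (fun v : Fin d → ℝ => Matrix.vecMulVec v v) volume

instance rho_sfinite (d : ℕ) : SFinite (rho d) := by unfold rho; infer_instance

lemma measurable_vecMulVec (d : ℕ) :
    Measurable fun v : Fin d → ℝ => Matrix.vecMulVec v v :=
  (continuous_id.matrix_vecMulVec continuous_id).measurable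

lemma measurableSet_notPSD (d : ℕ) :
    MeasurableSet {x : Matrix (Fin d) (Fin d) ℝ | ¬ x.PosSemidef} := by
  rw [← Set.compl_setOf]
  exact (isClosed_posSemidef d).measurableSet.compl

lemma rho_psd (d : ℕ) : rho d {x | ¬ x.PosSemidef} = 0 := by
  unfold rho
  rw [Measure.smul_apply, Measure.map_apply (measurable_vecMulVec d) (measurableSet_notPSD d)]
  have hempty : (fun v : Fin d → ℝ => Matrix.vecMulVec v v) ⁻¹' {x | ¬ x.PosSemidef} = ∅ := by
    ext v
    simp [posSemidef_vecMulVec']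
  rw [hempty]
  simp

lemma rho_laplace (d : ℕ) {s : Matrix (Fin d) (Fin d) ℝ} (hs : s.PosDef) :
    ∫⁻ x, ENNReal.ofReal (Real.exp (-(s * x).trace)) ∂(rho d)
      = ENNReal.ofReal (s.det ^ (-(1 : ℝ) / 2)) := by
  unfold rho
  rw [lintegral_smul_measure,
    lintegral_map (measurable_laplace_kernel d s) (measurable_vecMulVec d)]
  have h1 : ∫⁻ v : Fin d → ℝ, ENNReal.ofReal (Real.exp (-(s * vecMulVec v v).trace))
      = ∫⁻ v : Fin d → ℝ, ENNReal.ofReal (Real.exp (-(v ⬝ᵥ s *ᵥ v))) := by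
    refine lintegral_congr fun v => ?_
    rw [trace_mul_vecMulVec]
  rw [h1, gaussian_lintegral hs, smul_eq_mul,
    ← ENNReal.ofReal_mul (Real.rpow_nonneg Real.pi_pos.le _)]
  congr 1
  have hpi : Real.pi ^ (-(d : ℝ) / 2) * Real.pi ^ ((d : ℝ) / 2) = 1 := by
    rw [← Real.rpow_add Real.pi_pos]
    ring_nf
    exact Real.rpow_zero _
  calc Real.pi ^ (-(d : ℝ) / 2) * (Real.pi ^ ((d : ℝ) / 2) * s.det ^ (-(1 : ℝ) / 2))
      = (Real.pi ^ (-(d : ℝ) / 2) * Real.pi ^ ((d : ℝ) / 2)) * s.det ^ (-(1 : ℝ) / 2) := by ring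
    _ = s.det ^ (-(1 : ℝ) / 2) := by rw [hpi, one_mul]

lemma wishart_step {d : ℕ} {p : ℝ} {k : ℕ} {μ : Measure (Matrix (Fin d) (Fin d) ℝ)}
    (hμ : IsWishartM d p k μ) :
    IsWishartM d (p + 1 / 2) k
      (Measure.map (fun q : Matrix (Fin d) (Fin d) ℝ × Matrix (Fin d) (Fin d) ℝ => q.1 + q.2)
        (μ.prod (rho d))) := by
  haveI : SecondCountableTopology (Matrix (Fin d) (Fin d) ℝ) :=
    inferInstanceAs (SecondCountableTopology (Fin d → Fin d → ℝ))
  have haddm : Measurable fun q : Matrix (Fin d) (Fin d) ℝ × Matrix (Fin d) (Fin d) ℝ =>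
      q.1 + q.2 := measurable_fst.add measurable_snd
  constructor
  · rw [Measure.map_apply haddm (measurableSet_notPSD d)]
    have hsub : (fun q : Matrix (Fin d) (Fin d) ℝ × Matrix (Fin d) (Fin d) ℝ => q.1 + q.2) ⁻¹'
        {x | ¬ x.PosSemidef} ⊆
        ({x : Matrix (Fin d) (Fin d) ℝ | ¬ x.PosSemidef} ×ˢ Set.univ) ∪
        (Set.univ ×ˢ {x : Matrix (Fin d) (Fin d) ℝ | ¬ x.PosSemidef}) := by
      intro q hq
      rcases em q.1.PosSemidef with h1 | h1
      · rcases em q.2.PosSemidef with h2 | h2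
        · exact absurd (h1.add h2) hq
        · exact Or.inr (Set.mem_prod.mpr ⟨trivial, h2⟩)
      · exact Or.inl (Set.mem_prod.mpr ⟨h1, trivial⟩)
    refine measure_mono_null hsub (measure_union_null ?_ ?_)
    · rw [Measure.prod_prod, hμ.1, zero_mul]
    · rw [Measure.prod_prod, rho_psd, mul_zero]
  · intro s hs
    rw [lintegral_map (measurable_laplace_kernel d s) haddm]
    have heq : ∀ q : Matrix (Fin d) (Fin d) ℝ × Matrix (Fin d) (Fin d) ℝ,
        ENNReal.ofReal (Real.exp (-(s * (q.1 + q.2)).trace))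
          = ENNReal.ofReal (Real.exp (-(s * q.1).trace)) *
            ENNReal.ofReal (Real.exp (-(s * q.2).trace)) := by
      intro q
      rw [← ENNReal.ofReal_mul (Real.exp_pos _).le, ← Real.exp_add]
      congr 1
      rw [mul_add, Matrix.trace_add]
      ring
    rw [lintegral_congr heq,
      lintegral_prod_mul (measurable_laplace_kernel d s).aemeasurable
        (measurable_laplace_kernel d s).aemeasurable,
      hμ.2 s hs, rho_laplace d hs,
      ← ENNReal.ofReal_mul (mul_nonneg (Real.rpow_nonneg hs.det_pos.le _) (Real.exp_pos _).le)]
    congr 1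
    have hsplit : s.det ^ (-(p + 1 / 2)) = s.det ^ (-p) * s.det ^ (-(1 : ℝ) / 2) := by
      rw [← Real.rpow_add hs.det_pos]
      ring_nf
    rw [hsplit]
    ring

theorem stmt4 (d : ℕ) (hd : 3 ≤ d)
    (h : ¬ ∃ μ, IsWishartM d (((d : ℝ) - 2) / 2) d μ) :
    ∀ n : ℕ, n ≤ d - 2 → ¬ ∃ μ, IsWishartM d ((n : ℝ) / 2) d μ := by
  intro n hn hex
  apply h
  obtain ⟨μ, hμ⟩ := hex
  have key : ∀ j : ℕ, ∃ ν, IsWishartM d ((n : ℝ) / 2 + (j : ℝ) / 2) d ν := by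
    intro j
    induction j with
    | zero => exact ⟨μ, by simpa using hμ⟩
    | succ j ih =>
      obtain ⟨ν, hν⟩ := ih
      refine ⟨Measure.map
        (fun q : Matrix (Fin d) (Fin d) ℝ × Matrix (Fin d) (Fin d) ℝ => q.1 + q.2)
        (ν.prod (rho d)), ?_⟩
      have hexp : (n : ℝ) / 2 + ((j + 1 : ℕ) : ℝ) / 2
          = ((n : ℝ) / 2 + (j : ℝ) / 2) + 1 / 2 := by push_cast; ring
      rw [hexp]
      exact wishart_step hν
  obtain ⟨ν, hν⟩ := key (d - 2 - n)
  have hcast : (n : ℝ) / 2 + ((d - 2 - n : ℕ) : ℝ) / 2 = ((d : ℝ) - 2) / 2 := by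
    have h1 : ((d - 2 - n : ℕ) : ℝ) = (d : ℝ) - 2 - n := by
      rw [Nat.cast_sub hn, Nat.cast_sub (show 2 ≤ d by omega)]
      norm_num
    rw [h1]
    ring
  rw [← hcast]
  exact ⟨ν, hν⟩
end

section
/- For every real number s > 0, s^{−1/2} · exp(1/s) = (1/√π) · ∫_0^∞ exp(−sλ) · λ^{−1/2} · cosh(2√λ) dλ. (Equivalently, the measure m(1,1,1)(dλ) = π^{−1/2} λ^{−1/2} cosh(2√λ) 1_{(0,∞)}(λ) dλ has Laplace transform s^{−1/2} e^{1/s}.) -/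
open MeasureTheory Real Set

lemma int_lin (s c : ℝ) (hs : 0 < s) :
    Integrable fun x : ℝ => Real.exp (-s * x ^ 2 + c * x) := by
  have h : ∀ x : ℝ, -s * x ^ 2 + c * x = -s * (x - c / (2 * s)) ^ 2 + c ^ 2 / (4 * s) := by
    intro x; field_simp; ring
  have : Integrable fun x : ℝ =>
      Real.exp (-s * (x - c / (2 * s)) ^ 2) * Real.exp (c ^ 2 / (4 * s)) :=
    ((integrable_exp_neg_mul_sq hs).comp_sub_right _).mul_const _
  exact this.congr (by filter_upwards with x using by rw [← Real.exp_add, ← h x])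

lemma gauss_lin_s11 (s c : ℝ) (hs : 0 < s) :
    (∫ x : ℝ, Real.exp (-s * x ^ 2 + c * x))
      = Real.sqrt (π / s) * Real.exp (c ^ 2 / (4 * s)) := by
  have h : ∀ x : ℝ, -s * x ^ 2 + c * x = -s * (x - c / (2 * s)) ^ 2 + c ^ 2 / (4 * s) := by
    intro x; field_simp; ring
  simp_rw [h, Real.exp_add]
  rw [integral_mul_const,
    integral_sub_right_eq_self (fun x : ℝ => Real.exp (-s * x ^ 2)) (c / (2 * s)),
    integral_gaussian]

theorem stmt11 (s : ℝ) (hs : 0 < s) :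
    s ^ (-(1 / 2 : ℝ)) * Real.exp (1 / s)
      = (1 / Real.sqrt Real.pi) *
          ∫ l in Set.Ioi (0 : ℝ),
            Real.exp (-(s * l)) * l ^ (-(1 / 2 : ℝ)) * Real.cosh (2 * Real.sqrt l) := by
  have hsub : (∫ l in Ioi (0 : ℝ),
        Real.exp (-(s * l)) * l ^ (-(1 / 2 : ℝ)) * Real.cosh (2 * Real.sqrt l))
      = ∫ x in Ioi (0 : ℝ), 2 * (Real.exp (-(s * x ^ 2)) * Real.cosh (2 * x)) := by
    rw [← integral_comp_rpow_Ioi_of_pos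
        (g := fun l => Real.exp (-(s * l)) * l ^ (-(1 / 2 : ℝ)) * Real.cosh (2 * Real.sqrt l))
        (two_pos)]
    refine setIntegral_congr_fun measurableSet_Ioi fun x hx => ?_
    have hx0 : (0 : ℝ) < x := hx
    rw [smul_eq_mul, show (2 : ℝ) - 1 = 1 by norm_num, Real.rpow_one, Real.rpow_two,
      Real.rpow_neg (sq_nonneg x), ← Real.sqrt_eq_rpow, Real.sqrt_sq hx0.le]
    field_simp
  have heven : (∫ x : ℝ, Real.exp (-(s * x ^ 2)) * Real.cosh (2 * x))
      = 2 * ∫ x in Ioi (0 : ℝ), Real.exp (-(s * x ^ 2)) * Real.cosh (2 * x) := by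
    rw [← integral_comp_abs (f := fun x => Real.exp (-(s * x ^ 2)) * Real.cosh (2 * x))]
    have habs : ∀ x : ℝ, Real.cosh (2 * |x|) = Real.cosh (2 * x) := by
      intro x
      rcases abs_cases x with ⟨h, _⟩ | ⟨h, _⟩ <;> simp [h, mul_neg, Real.cosh_neg]
    simp [sq_abs, habs]
  have hcosh : (∫ x : ℝ, Real.exp (-(s * x ^ 2)) * Real.cosh (2 * x))
      = Real.sqrt (π / s) * Real.exp (1 / s) := by
    have e : ∀ x : ℝ, Real.exp (-(s * x ^ 2)) * Real.cosh (2 * x)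
        = (Real.exp (-s * x ^ 2 + 2 * x) + Real.exp (-s * x ^ 2 + (-2) * x)) / 2 := by
      intro x
      rw [Real.cosh_eq, show -s * x ^ 2 + 2 * x = -(s * x ^ 2) + 2 * x by ring,
        show -s * x ^ 2 + (-2) * x = -(s * x ^ 2) + -(2 * x) by ring,
        Real.exp_add, Real.exp_add]
      ring
    simp_rw [e]
    rw [integral_div, integral_add (int_lin s 2 hs) (int_lin s (-2) hs),
      gauss_lin_s11 s 2 hs, gauss_lin_s11 s (-2) hs,
      show ((2 : ℝ)) ^ 2 / (4 * s) = 1 / s by rw [show ((2:ℝ))^2 = 4 by norm_num]; field_simp,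
      show ((-2 : ℝ)) ^ 2 / (4 * s) = 1 / s by rw [show ((-2:ℝ))^2 = 4 by norm_num]; field_simp]
    ring
  rw [hsub, integral_const_mul, ← heven, hcosh]
  have hπ : (0 : ℝ) < Real.sqrt π := Real.sqrt_pos.mpr pi_pos
  have hss : (0 : ℝ) < Real.sqrt s := Real.sqrt_pos.mpr hs
  rw [Real.sqrt_div pi_pos.le, Real.rpow_neg hs.le, ← Real.sqrt_eq_rpow]
  field_simp
end

section
/- Let d ≥ 1, let x be a d×d real symmetric positive definite matrix, and let m₁, ..., m_d be complex numbers. Then Φ_{m₁,...,m_d}(x^{−1}) = Φ_{−m_d, −m_{d−1}, ..., −m₁}(x). -/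
set_option synthInstance.maxHeartbeats 400000
set_option maxHeartbeats 1000000
open MeasureTheory Matrix Topology

instance ogBorel (d : ℕ) : BorelSpace (Matrix.orthogonalGroup (Fin d) ℝ) :=
  Subtype.borelSpace ((Matrix.orthogonalGroup (Fin d) ℝ : Set (Matrix (Fin d) (Fin d) ℝ)))

instance ogTopGroup (d : ℕ) : IsTopologicalGroup (Matrix.orthogonalGroup (Fin d) ℝ) where
  continuous_mul := continuous_mul
  continuous_inv := by
    rw [← Unitary.star_eq_inv']
    exact continuous_induced_rng.mpr (continuous_star.comp continuous_subtype_val)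

instance ogCompact (d : ℕ) : CompactSpace (Matrix.orthogonalGroup (Fin d) ℝ) := by
  have : IsCompact (Matrix.orthogonalGroup (Fin d) ℝ : Set (Matrix (Fin d) (Fin d) ℝ)) := by
    have hsub : (Matrix.orthogonalGroup (Fin d) ℝ : Set (Matrix (Fin d) (Fin d) ℝ)) ⊆
        Set.univ.pi fun _ : Fin d => Set.univ.pi fun _ : Fin d => Set.Icc (-1 : ℝ) 1 := by
      intro A hA
      refine Set.mem_univ_pi.mpr fun i => Set.mem_univ_pi.mpr fun j => ?_
      have := entry_norm_bound_of_unitary hA i j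
      rw [Real.norm_eq_abs] at this
      exact Set.mem_Icc.mpr (abs_le.mp this)
    have hclosed : IsClosed (Matrix.orthogonalGroup (Fin d) ℝ : Set (Matrix (Fin d) (Fin d) ℝ)) := by
      have : (Matrix.orthogonalGroup (Fin d) ℝ : Set (Matrix (Fin d) (Fin d) ℝ)) =
          (fun A : Matrix (Fin d) (Fin d) ℝ => (star A * A, A * star A)) ⁻¹' {(1, 1)} := by
        ext A
        simp [Matrix.mem_orthogonalGroup_iff, Matrix.mem_unitaryGroup_iff, Unitary.mem_iff,
          Prod.ext_iff]
      rw [this]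
      exact isClosed_singleton.preimage
        (((continuous_star.comp continuous_id).matrix_mul continuous_id).prodMk
          (continuous_id.matrix_mul (continuous_star.comp continuous_id)))
    exact ((isCompact_univ_pi fun _ =>
      isCompact_univ_pi fun _ => isCompact_Icc).of_isClosed_subset hclosed hsub)
  exact isCompact_iff_compactSpace.mp this

instance ogNonempty (d : ℕ) : Nonempty (Matrix.orthogonalGroup (Fin d) ℝ) := ⟨1⟩

noncomputable def haarO (d : ℕ) : Measure (Matrix.orthogonalGroup (Fin d) ℝ) :=
  Measure.haarMeasure ⊤

/-- The `j`-th leading principal minor `Δ_{j+1}(x)`. -/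
noncomputable def leadingMinor {d : ℕ} (x : Matrix (Fin d) (Fin d) ℝ) (j : Fin d) : ℝ :=
  (x.submatrix (Fin.castLE j.isLt) (Fin.castLE j.isLt)).det

/-- `Δ_{m₁,...,m_d}(x) = ∏_j Δ_j(x)^(m_j - m_{j+1})`, with `m_{d+1} = 0`. -/
noncomputable def DeltaZ {d : ℕ} (m : Fin d → ℂ) (x : Matrix (Fin d) (Fin d) ℝ) : ℂ :=
  ∏ j : Fin d,
    (leadingMinor x j : ℂ) ^ (m j - if h : (j : ℕ) + 1 < d then m ⟨(j : ℕ) + 1, h⟩ else 0)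

/-- The zonal function `Φ_{m₁,...,m_d}(x) = ∫_{O(d)} Δ_m(u x uᵀ) du`. -/
noncomputable def PhiZ {d : ℕ} (m : Fin d → ℂ) (x : Matrix (Fin d) (Fin d) ℝ) : ℂ :=
  ∫ u : Matrix.orthogonalGroup (Fin d) ℝ,
    DeltaZ m ((u : Matrix (Fin d) (Fin d) ℝ) * x * (u : Matrix (Fin d) (Fin d) ℝ)ᵀ) ∂(haarO d)

theorem posDef_submatrix' {d : ℕ} {y : Matrix (Fin d) (Fin d) ℝ} (hy : y.PosDef)
    {ι : Type*} [Fintype ι] [DecidableEq ι]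
    (f : ι → Fin d) (hf : Function.Injective f) : (y.submatrix f f).PosDef := by
  refine Matrix.PosDef.of_dotProduct_mulVec_pos (hy.1.submatrix f) ?_
  intro v hv
  set w : Fin d → ℝ := fun i => ∑ a, if i = f a then v a else 0 with hw
  have hwf : ∀ a, w (f a) = v a := by
    intro a
    simp only [hw, hf.eq_iff]
    simp
  have hw0 : w ≠ 0 := by
    obtain ⟨a, ha⟩ := Function.ne_iff.mp hv
    intro h
    exact ha (by simpa [hwf a] using congrFun h (f a))
  have collapse : ∀ g : Fin d → ℝ, ∑ i, (∑ a, if i = f a then v a else 0) * g i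
      = ∑ a, v a * g (f a) := by
    intro g
    have : ∀ i : Fin d, (∑ a, if i = f a then v a else 0) * g i
        = ∑ a, if i = f a then v a * g i else 0 := by
      intro i; rw [Finset.sum_mul]; exact Finset.sum_congr rfl fun a _ => by rw [ite_mul, zero_mul]
    rw [Finset.sum_congr rfl fun i _ => this i, Finset.sum_comm]
    exact Finset.sum_congr rfl fun a _ => by simp [Finset.sum_ite_eq']
  have collapse2 : ∀ g : Fin d → ℝ, ∑ j, g j * (∑ b, if j = f b then v b else 0)
      = ∑ b, g (f b) * v b := by
    intro g
    have : ∀ j : Fin d, g j * (∑ b, if j = f b then v b else 0)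
        = ∑ b, if j = f b then g j * v b else 0 := by
      intro j; rw [Finset.mul_sum]; exact Finset.sum_congr rfl fun b _ => by rw [mul_ite, mul_zero]
    rw [Finset.sum_congr rfl fun j _ => this j, Finset.sum_comm]
    exact Finset.sum_congr rfl fun b _ => by simp [Finset.sum_ite_eq']
  have hq : dotProduct (star w) (y *ᵥ w) = dotProduct (star v) ((y.submatrix f f) *ᵥ v) := by
    simp only [star_trivial, dotProduct, Matrix.mulVec, Matrix.submatrix_apply]
    calc ∑ i, w i * ∑ j, y i j * w j
        = ∑ a, v a * ∑ j, y (f a) j * w j := collapse _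
      _ = ∑ a, v a * ∑ b, y (f a) (f b) * v b := by
          refine Finset.sum_congr rfl fun a _ => ?_
          rw [collapse2 fun j => y (f a) j]
  have := hy.dotProduct_mulVec_pos hw0
  rw [hq] at this
  exact this

theorem det_submatrix_congr {d n n' : ℕ} (y : Matrix (Fin d) (Fin d) ℝ) (h : n = n')
    {f : Fin n → Fin d} {f' : Fin n' → Fin d}
    (hf : ∀ a : Fin n', f (Fin.cast h.symm a) = f' a) :
    (y.submatrix f f).det = (y.submatrix f' f').det := by
  subst h
  have : f = f' := funext fun a => hf a
  rw [this]

theorem det_submatrix_perm {d n : ℕ} (y : Matrix (Fin d) (Fin d) ℝ)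
    (f : Fin n → Fin d) (σ : Equiv.Perm (Fin n)) :
    (y.submatrix (f ∘ σ) (f ∘ σ)).det = (y.submatrix f f).det := by
  rw [show y.submatrix (f ∘ σ) (f ∘ σ) = (y.submatrix f f).submatrix σ σ from rfl]
  exact Matrix.det_submatrix_equiv_self σ _

theorem jacobi_aux {d k l : ℕ} (hkl : k + l = d) (y : Matrix (Fin d) (Fin d) ℝ)
    (hy : y.PosDef) :
    (y⁻¹.submatrix (fun a : Fin k => (⟨a.1, by omega⟩ : Fin d)) fun a => ⟨a.1, by omega⟩).det
      * y.det
    = (y.submatrix (fun b : Fin l => (⟨k + b.1, by omega⟩ : Fin d)) fun b => ⟨k + b.1, by omega⟩).det := by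
  let e : Fin k ⊕ Fin l ≃ Fin d := finSumFinEquiv.trans (finCongr hkl)
  have hinl : ∀ a : Fin k, e (Sum.inl a) = (⟨a.1, by omega⟩ : Fin d) := by
    intro a; ext; simp [e, finSumFinEquiv]
  have hinr : ∀ b : Fin l, e (Sum.inr b) = (⟨k + b.1, by omega⟩ : Fin d) := by
    intro b; ext; simp [e, finSumFinEquiv]
  set A := y.submatrix (e ∘ Sum.inl) (e ∘ Sum.inl) with hA
  set B := y.submatrix (e ∘ Sum.inl) (e ∘ Sum.inr) with hB
  set C := y.submatrix (e ∘ Sum.inr) (e ∘ Sum.inl) with hC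
  set D := y.submatrix (e ∘ Sum.inr) (e ∘ Sum.inr) with hD
  have hblocks : y.submatrix e e = fromBlocks A B C D := by
    ext i j
    cases i <;> cases j <;> rfl
  have hYpd : (y.submatrix e e).PosDef := posDef_submatrix' hy e e.injective
  have hDpd : D.PosDef := posDef_submatrix' hy (e ∘ Sum.inr) (e.injective.comp Sum.inr_injective)
  haveI : Invertible D := invertibleOfIsUnitDet D (isUnit_iff_ne_zero.mpr hDpd.det_pos.ne')
  haveI hYi : Invertible (y.submatrix e e) :=
    invertibleOfIsUnitDet _ (isUnit_iff_ne_zero.mpr hYpd.det_pos.ne')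
  haveI : Invertible (fromBlocks A B C D) := hblocks ▸ hYi
  haveI iS : Invertible (A - B * ⅟D * C) := invertibleOfFromBlocks₂₂Invertible A B C D
  have hdetY : (y.submatrix e e).det = D.det * (A - B * ⅟D * C).det := by
    rw [hblocks, Matrix.det_fromBlocks₂₂]
  have hinv : y⁻¹.submatrix e e = fromBlocks
      (⅟(A - B * ⅟D * C)) (-(⅟(A - B * ⅟D * C) * B * ⅟D))
      (-(⅟D * C * ⅟(A - B * ⅟D * C))) (⅟D + ⅟D * C * ⅟(A - B * ⅟D * C) * B * ⅟D) := by
    rw [← Matrix.inv_submatrix_equiv y e e, hblocks, ← invOf_eq_nonsing_inv,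
      Matrix.invOf_fromBlocks₂₂_eq]
  have h11 : y⁻¹.submatrix (e ∘ Sum.inl) (e ∘ Sum.inl) = ⅟(A - B * ⅟D * C) := by
    ext i j
    have := congrFun (congrFun hinv (Sum.inl i)) (Sum.inl j)
    simpa using this
  have hdetyy : y.det = (y.submatrix e e).det := (Matrix.det_submatrix_equiv_self e y).symm
  have hSdet : (A - B * ⅟D * C).det ≠ 0 := by
    intro h0
    have := hYpd.det_pos
    rw [hdetY, h0, mul_zero] at this
    exact lt_irrefl _ this
  have hL : (y⁻¹.submatrix (fun a : Fin k => (⟨a.1, by omega⟩ : Fin d)) fun a => ⟨a.1, by omega⟩)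
      = y⁻¹.submatrix (e ∘ Sum.inl) (e ∘ Sum.inl) := by
    have : (fun a : Fin k => (⟨a.1, by omega⟩ : Fin d)) = e ∘ Sum.inl :=
      funext fun a => (hinl a).symm
    rw [this]
  have hR : (y.submatrix (fun b : Fin l => (⟨k + b.1, by omega⟩ : Fin d)) fun b => ⟨k + b.1, by omega⟩)
      = D := by
    have : (fun b : Fin l => (⟨k + b.1, by omega⟩ : Fin d)) = e ∘ Sum.inr :=
      funext fun b => (hinr b).symm
    rw [hD, this]
  rw [hL, hR, h11, invOf_eq_nonsing_inv, Matrix.det_nonsing_inv, hdetyy, hdetY, Ring.inverse_eq_inv']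
  rw [mul_comm D.det, ← mul_assoc, inv_mul_cancel₀ hSdet, one_mul]


theorem leadingMinor_pos {d : ℕ} {y : Matrix (Fin d) (Fin d) ℝ} (hy : y.PosDef) (j : Fin d) :
    0 < leadingMinor y j :=
  (posDef_submatrix' hy _ ((Fin.strictMono_castLE j.isLt).injective)).det_pos

theorem leadingMinor_last {d : ℕ} (hd : 1 ≤ d) (x : Matrix (Fin d) (Fin d) ℝ)
    (hv : d - 1 < d) : leadingMinor x ⟨d - 1, hv⟩ = x.det := by
  unfold leadingMinor
  rw [det_submatrix_congr x (show d - 1 + 1 = d by omega)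
    (f' := id) (fun a => Fin.ext (by simp))]
  simp

theorem key_minor {d : ℕ} (hd : 1 ≤ d) {y : Matrix (Fin d) (Fin d) ℝ} (hy : y.PosDef)
    (j : Fin d) :
    leadingMinor y⁻¹ j * y.det =
      if h : (j : ℕ) + 1 < d then
        leadingMinor (y.submatrix Fin.rev Fin.rev) ⟨d - (j : ℕ) - 2, by omega⟩ else 1 := by
  by_cases h : (j : ℕ) + 1 < d
  · rw [dif_pos h]
    have hkl : ((j : ℕ) + 1) + (d - (j : ℕ) - 1) = d := by omega
    have hjac := jacobi_aux hkl y hy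
    have hL : leadingMinor y⁻¹ j =
        (y⁻¹.submatrix (fun a : Fin ((j : ℕ) + 1) => (⟨a.1, by omega⟩ : Fin d))
          fun a => ⟨a.1, by omega⟩).det := by
      unfold leadingMinor
      exact det_submatrix_congr _ rfl (fun a => Fin.ext (by simp))
    have hR : (y.submatrix
          (fun b : Fin (d - (j : ℕ) - 1) => (⟨(j : ℕ) + 1 + b.1, by omega⟩ : Fin d))
          fun b => ⟨(j : ℕ) + 1 + b.1, by omega⟩).det
        = leadingMinor (y.submatrix Fin.rev Fin.rev) ⟨d - (j : ℕ) - 2, by omega⟩ := by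
      unfold leadingMinor
      rw [Matrix.submatrix_submatrix]
      rw [← det_submatrix_perm y
        (fun b : Fin (d - (j : ℕ) - 1) => (⟨(j : ℕ) + 1 + b.1, by omega⟩ : Fin d)) Fin.revPerm]
      refine det_submatrix_congr y (show d - (j : ℕ) - 1 = d - (j:ℕ) - 2 + 1 by omega) ?_
      intro a
      have ha := a.2
      apply Fin.ext
      simp [Fin.val_rev]
      omega
    rw [hL, hjac, hR]
  · rw [dif_neg h]
    have hj : j = ⟨d - 1, by omega⟩ := Fin.ext (show (j:ℕ) = d - 1 by have := j.2; omega)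
    rw [hj, leadingMinor_last hd]
    exact Matrix.det_nonsing_inv_mul_det y (isUnit_iff_ne_zero.mpr hy.det_pos.ne')

theorem cpow_pos_eq_exp {a : ℝ} (ha : 0 < a) (z : ℂ) :
    (a : ℂ) ^ z = Complex.exp (z * Real.log a) := by
  rw [Complex.cpow_def_of_ne_zero (by exact_mod_cast ha.ne'), ← Complex.ofReal_log ha.le,
    mul_comm]

theorem sum_identity (d : ℕ) (hd : 1 ≤ d) (g ℓ : ℕ → ℂ) (hg : g d = 0) (hl : ℓ 0 = 0) :
    ∑ k ∈ Finset.range d, (g k - g (k + 1)) * (ℓ (d - 1 - k) - ℓ d)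
    = ∑ k ∈ Finset.range d,
        ((if k + 1 < d then g (d - 2 - k) else 0) - g (d - 1 - k)) * ℓ (k + 1) := by
  obtain ⟨e, rfl⟩ : ∃ e, d = e + 1 := ⟨d - 1, by omega⟩
  simp only [mul_sub]
  rw [Finset.sum_sub_distrib, ← Finset.sum_mul, Finset.sum_range_sub' g (e + 1), hg, sub_zero]
  set F : ℕ → ℂ := fun t => (g (e - t) - g (e - t + 1)) * ℓ t with hF
  have h2 : ∑ k ∈ Finset.range (e + 1), (g k - g (k + 1)) * ℓ (e + 1 - 1 - k)
      = ∑ k ∈ Finset.range (e + 1), F (e + 1 - 1 - k) := by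
    refine Finset.sum_congr rfl fun k hk => ?_
    have hk' := Finset.mem_range.mp hk
    simp only [hF]
    rw [show e - (e + 1 - 1 - k) = k by omega]
  rw [h2, Finset.sum_range_reflect F (e + 1), Finset.sum_range_succ' F e]
  have hF0 : F 0 = 0 := by simp [hF, hl]
  rw [hF0, add_zero, Finset.sum_range_succ]
  rw [show (if e + 1 < e + 1 then g (e + 1 - 2 - e) else 0) = 0 from if_neg (by omega),
    show e + 1 - 1 - e = 0 by omega]
  rw [zero_sub, neg_mul]
  have h3 : ∀ k ∈ Finset.range e,
      F (k + 1) = ((if k + 1 < e + 1 then g (e + 1 - 2 - k) else 0) - g (e + 1 - 1 - k))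
        * ℓ (k + 1) := by
    intro k hk
    have hk' := Finset.mem_range.mp hk
    simp only [hF]
    rw [if_pos (by omega), show e - (k + 1) = e + 1 - 2 - k by omega,
      show e + 1 - 2 - k + 1 = e + 1 - 1 - k by omega]
  rw [Finset.sum_congr rfl h3]
  ring


theorem DeltaZ_inv {d : ℕ} (hd : 1 ≤ d) {y : Matrix (Fin d) (Fin d) ℝ} (hy : y.PosDef)
    (m : Fin d → ℂ) :
    DeltaZ m y⁻¹ = DeltaZ (fun j => -m j.rev) (y.submatrix Fin.rev Fin.rev) := by
  set z := y.submatrix Fin.rev Fin.rev with hz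
  have hzpd : z.PosDef := posDef_submatrix' hy Fin.rev Fin.rev_injective
  have hinv : y⁻¹.PosDef := hy.inv
  have hdet : z.det = y.det := by
    rw [hz, show y.submatrix Fin.rev Fin.rev
      = y.submatrix (Fin.revPerm : Equiv.Perm (Fin d)) (Fin.revPerm : Equiv.Perm (Fin d)) from rfl]
    exact Matrix.det_submatrix_equiv_self _ _
  set g : ℕ → ℂ := fun k => if h : k < d then m ⟨k, h⟩ else 0 with hgdef
  set L : ℕ → ℂ := fun k =>
    if h : k - 1 < d ∧ 1 ≤ k then (Real.log (leadingMinor z ⟨k - 1, h.1⟩) : ℂ) else 0 with hLdef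
  have hg_d : g d = 0 := dif_neg (by omega)
  have hL0 : L 0 = 0 := dif_neg (by omega)
  have hLd : L d = (Real.log y.det : ℂ) := by
    have h1 : d - 1 < d ∧ 1 ≤ d := ⟨by omega, hd⟩
    simp only [hLdef]
    rw [dif_pos h1, leadingMinor_last hd z h1.1, hdet]
  have hkey : ∀ j : Fin d, (Real.log (leadingMinor y⁻¹ j) : ℂ) = L (d - 1 - (j : ℕ)) - L d := by
    intro j
    have hkm := key_minor hd hy j
    by_cases h : (j : ℕ) + 1 < d
    · rw [dif_pos h] at hkm
      have hQpos : 0 < leadingMinor z ⟨d - (j : ℕ) - 2, by omega⟩ := leadingMinor_pos hzpd _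
      have hP : leadingMinor y⁻¹ j = leadingMinor z ⟨d - (j : ℕ) - 2, by omega⟩ / y.det := by
        rw [eq_div_iff hy.det_pos.ne']; exact hkm
      rw [hP, Real.log_div hQpos.ne' hy.det_pos.ne', hLd]
      push_cast
      congr 2
      simp only [hLdef]
      rw [dif_pos (show d - 1 - (j:ℕ) - 1 < d ∧ 1 ≤ d - 1 - (j:ℕ) by omega)]
      norm_cast
      exact congrArg (fun t : Fin d => Real.log (leadingMinor z t))
        (Fin.ext (show d - (j:ℕ) - 2 = d - 1 - (j:ℕ) - 1 by omega))
    · rw [dif_neg h] at hkm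
      have hP : leadingMinor y⁻¹ j = 1 / y.det := by
        rw [eq_div_iff hy.det_pos.ne']; exact hkm
      rw [hP, Real.log_div one_ne_zero hy.det_pos.ne', Real.log_one, hLd,
        show d - 1 - (j : ℕ) = 0 by have := j.2; omega, hL0]
      push_cast
      ring
  have hexp1 : ∀ j : Fin d,
      (m j - if h : (j : ℕ) + 1 < d then m ⟨(j : ℕ) + 1, h⟩ else 0)
        = g (j : ℕ) - g ((j : ℕ) + 1) := by
    intro j
    rw [hgdef]
    by_cases h : (j : ℕ) + 1 < d <;> simp [h]
  have hexp2 : ∀ j : Fin d,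
      (-m j.rev - if h : (j : ℕ) + 1 < d then -m (⟨(j : ℕ) + 1, h⟩ : Fin d).rev else 0)
        = (if (j : ℕ) + 1 < d then g (d - 2 - (j : ℕ)) else 0) - g (d - 1 - (j : ℕ)) := by
    intro j
    have h1 : m j.rev = g (d - 1 - (j : ℕ)) := by
      simp only [hgdef]
      rw [dif_pos (show d - 1 - (j:ℕ) < d by have := j.2; omega)]
      exact congrArg m (Fin.ext (show d - ((j:ℕ) + 1) = d - 1 - (j:ℕ) by omega))
    by_cases h : (j : ℕ) + 1 < d
    · have h2 : m (⟨(j : ℕ) + 1, h⟩ : Fin d).rev = g (d - 2 - (j : ℕ)) := by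
        simp only [hgdef]
        rw [dif_pos (show d - 2 - (j:ℕ) < d by omega)]
        exact congrArg m (Fin.ext (show d - (((j:ℕ) + 1) + 1) = d - 2 - (j:ℕ) by omega))
      rw [dif_pos h, if_pos h, h1, h2]; ring
    · rw [dif_neg h, if_neg h, h1]; ring
  have hLsucc : ∀ j : Fin d, L ((j : ℕ) + 1) = (Real.log (leadingMinor z j) : ℂ) := by
    intro j
    simp only [hLdef]
    rw [dif_pos (show (j:ℕ) + 1 - 1 < d ∧ 1 ≤ (j:ℕ) + 1 by have := j.2; omega)]
    simp
  calc DeltaZ m y⁻¹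
      = ∏ j : Fin d,
          Complex.exp ((g (j:ℕ) - g ((j:ℕ) + 1)) * (L (d - 1 - (j:ℕ)) - L d)) := by
        unfold DeltaZ
        refine Finset.prod_congr rfl fun j _ => ?_
        rw [cpow_pos_eq_exp (leadingMinor_pos hinv j), hkey j, hexp1 j]
    _ = Complex.exp (∑ j : Fin d, (g (j:ℕ) - g ((j:ℕ) + 1)) * (L (d - 1 - (j:ℕ)) - L d)) :=
        (Complex.exp_sum _ _).symm
    _ = Complex.exp (∑ k ∈ Finset.range d, (g k - g (k + 1)) * (L (d - 1 - k) - L d)) := by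
        rw [Fin.sum_univ_eq_sum_range (fun k => (g k - g (k + 1)) * (L (d - 1 - k) - L d)) d]
    _ = Complex.exp (∑ k ∈ Finset.range d,
          ((if k + 1 < d then g (d - 2 - k) else 0) - g (d - 1 - k)) * L (k + 1)) := by
        rw [sum_identity d hd g L hg_d hL0]
    _ = Complex.exp (∑ j : Fin d,
          ((if (j:ℕ) + 1 < d then g (d - 2 - (j:ℕ)) else 0) - g (d - 1 - (j:ℕ))) * L ((j:ℕ) + 1)) := by
        rw [Fin.sum_univ_eq_sum_range
          (fun k => ((if k + 1 < d then g (d - 2 - k) else 0) - g (d - 1 - k)) * L (k + 1)) d]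
    _ = DeltaZ (fun j => -m j.rev) z := by
        unfold DeltaZ
        rw [Complex.exp_sum]
        refine Finset.prod_congr rfl fun j _ => ?_
        rw [cpow_pos_eq_exp (leadingMinor_pos hzpd j), hexp2 j, hLsucc j]

theorem conj_real {d : ℕ} (A : Matrix (Fin d) (Fin d) ℝ) : Aᴴ = Aᵀ := by
  ext i j; simp [Matrix.conjTranspose_apply]

theorem posdef_conj {d : ℕ} {x u : Matrix (Fin d) (Fin d) ℝ} (hx : x.PosDef)
    (h1 : u * uᵀ = 1) : (u * x * uᵀ).PosDef := by
  refine Matrix.PosDef.of_dotProduct_mulVec_pos ?_ fun v hv => ?_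
  · show (u * x * uᵀ)ᴴ = _
    rw [conj_real, Matrix.transpose_mul, Matrix.transpose_mul, Matrix.transpose_transpose]
    have hxs : xᵀ = x := by rw [← conj_real]; exact hx.1
    rw [hxs, Matrix.mul_assoc]
  · have hw : v ᵥ* u ≠ 0 := by
      intro h0
      apply hv
      have : v ᵥ* u ᵥ* uᵀ = v := by rw [Matrix.vecMul_vecMul, h1, Matrix.vecMul_one]
      rw [← this, h0, Matrix.zero_vecMul]
    have hthis := hx.dotProduct_mulVec_pos hw
    have hsv : ∀ w : Fin d → ℝ, star w = w := fun w => funext fun i => star_trivial _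
    rw [hsv] at hthis ⊢
    have e1 : (u * x * uᵀ) *ᵥ v = u *ᵥ (x *ᵥ (uᵀ *ᵥ v)) := by
      rw [Matrix.mulVec_mulVec, Matrix.mulVec_mulVec]
    rw [e1, Matrix.dotProduct_mulVec, ← Matrix.mulVec_transpose, Matrix.mulVec_transpose]
    exact hthis

noncomputable def revMat (d : ℕ) : Matrix (Fin d) (Fin d) ℝ :=
  Matrix.of fun i j => if j = i.rev then 1 else 0

theorem revMat_mul {d : ℕ} (A : Matrix (Fin d) (Fin d) ℝ) :
    revMat d * A = A.submatrix Fin.rev id := by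
  ext i j
  simp only [Matrix.mul_apply, revMat, Matrix.of_apply, Matrix.submatrix_apply, id]
  rw [Finset.sum_congr rfl fun k _ => (by rw [ite_mul, one_mul, zero_mul] :
    (if k = i.rev then (1:ℝ) else 0) * A k j = if k = i.rev then A k j else 0)]
  simp [Finset.sum_ite_eq']
theorem mul_revMat_transpose {d : ℕ} (A : Matrix (Fin d) (Fin d) ℝ) :
    A * (revMat d)ᵀ = A.submatrix id Fin.rev := by
  ext i j
  simp only [Matrix.mul_apply, revMat, Matrix.transpose_apply, Matrix.of_apply,
    Matrix.submatrix_apply, id]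
  rw [Finset.sum_congr rfl fun k _ => (by rw [mul_ite, mul_one, mul_zero] :
    A i k * (if k = j.rev then (1:ℝ) else 0) = if k = j.rev then A i k else 0)]
  simp [Finset.sum_ite_eq']

theorem revMat_orth (d : ℕ) : revMat d ∈ Matrix.orthogonalGroup (Fin d) ℝ := by
  rw [Matrix.mem_orthogonalGroup_iff]
  rw [mul_revMat_transpose]
  ext i j
  simp only [Matrix.submatrix_apply, revMat, Matrix.of_apply, id]
  simp only [Fin.rev_inj]
  by_cases h : i = j
  · subst h; simp
  · simp [Matrix.one_apply, h, Ne.symm h]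

theorem stmt13 (d : ℕ) (hd : 1 ≤ d) (x : Matrix (Fin d) (Fin d) ℝ) (hx : x.PosDef)
    (m : Fin d → ℂ) :
    PhiZ m x⁻¹ = PhiZ (fun j => -m j.rev) x := by
  have hdu : IsUnit x.det := isUnit_iff_ne_zero.mpr hx.det_pos.ne'
  set r : Matrix.orthogonalGroup (Fin d) ℝ := ⟨revMat d, revMat_orth d⟩ with hr
  have key : ∀ u : Matrix.orthogonalGroup (Fin d) ℝ,
      DeltaZ m ((u : Matrix (Fin d) (Fin d) ℝ) * x⁻¹ * (u : Matrix (Fin d) (Fin d) ℝ)ᵀ)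
        = DeltaZ (fun j => -m j.rev)
            (((r * u : Matrix.orthogonalGroup (Fin d) ℝ) : Matrix (Fin d) (Fin d) ℝ) * x *
              ((r * u : Matrix.orthogonalGroup (Fin d) ℝ) : Matrix (Fin d) (Fin d) ℝ)ᵀ) := by
    intro u
    have hmem := u.2
    rw [Matrix.mem_orthogonalGroup_iff] at hmem
    have huo2 : (u : Matrix (Fin d) (Fin d) ℝ) * (u : Matrix (Fin d) (Fin d) ℝ)ᵀ = 1 := by
      rw [← conj_real, ← Matrix.star_eq_conjTranspose]; exact hmem
    have hmem' := u.2
    rw [Matrix.mem_orthogonalGroup_iff'] at hmem'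
    have huo1 : (u : Matrix (Fin d) (Fin d) ℝ)ᵀ * (u : Matrix (Fin d) (Fin d) ℝ) = 1 := by
      rw [← conj_real, ← Matrix.star_eq_conjTranspose]; exact hmem'
    set yy := (u : Matrix (Fin d) (Fin d) ℝ) * x * (u : Matrix (Fin d) (Fin d) ℝ)ᵀ with hyy
    have hyypd : yy.PosDef := posdef_conj hx huo2
    have hinv : (u : Matrix (Fin d) (Fin d) ℝ) * x⁻¹ * (u : Matrix (Fin d) (Fin d) ℝ)ᵀ = yy⁻¹ := by
      symm
      apply Matrix.inv_eq_right_inv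
      rw [hyy]
      simp only [Matrix.mul_assoc]
      rw [← Matrix.mul_assoc ((u : Matrix (Fin d) (Fin d) ℝ)ᵀ) (u : Matrix (Fin d) (Fin d) ℝ)
        (x⁻¹ * (u : Matrix (Fin d) (Fin d) ℝ)ᵀ), huo1, one_mul,
        ← Matrix.mul_assoc x x⁻¹ ((u : Matrix (Fin d) (Fin d) ℝ)ᵀ),
        Matrix.mul_nonsing_inv x hdu, one_mul]
      exact huo2
    rw [hinv, DeltaZ_inv hd hyypd m]
    congr 1
    have hcoe : ((r * u : Matrix.orthogonalGroup (Fin d) ℝ) : Matrix (Fin d) (Fin d) ℝ)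
        = revMat d * (u : Matrix (Fin d) (Fin d) ℝ) := rfl
    have hstep : (revMat d * (u : Matrix (Fin d) (Fin d) ℝ)) * x *
        (revMat d * (u : Matrix (Fin d) (Fin d) ℝ))ᵀ = revMat d * yy * (revMat d)ᵀ := by
      rw [Matrix.transpose_mul, hyy]
      simp only [Matrix.mul_assoc]
    rw [hcoe, hstep, revMat_mul, mul_revMat_transpose, Matrix.submatrix_submatrix]
    simp
  unfold PhiZ
  haveI : (haarO d).IsMulLeftInvariant := MeasureTheory.Measure.isMulLeftInvariant_haarMeasure ⊤
  calc (∫ u : Matrix.orthogonalGroup (Fin d) ℝ,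
        DeltaZ m ((u : Matrix (Fin d) (Fin d) ℝ) * x⁻¹ * (u : Matrix (Fin d) (Fin d) ℝ)ᵀ)
          ∂(haarO d))
      = ∫ u : Matrix.orthogonalGroup (Fin d) ℝ,
          (fun v : Matrix.orthogonalGroup (Fin d) ℝ => DeltaZ (fun j => -m j.rev)
            ((v : Matrix (Fin d) (Fin d) ℝ) * x * (v : Matrix (Fin d) (Fin d) ℝ)ᵀ)) (r * u)
          ∂(haarO d) := by
        simp only [key]
    _ = ∫ v : Matrix.orthogonalGroup (Fin d) ℝ,
          DeltaZ (fun j => -m j.rev)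
            ((v : Matrix (Fin d) (Fin d) ℝ) * x * (v : Matrix (Fin d) (Fin d) ℝ)ᵀ) ∂(haarO d) :=
        MeasureTheory.integral_mul_left_eq_self (μ := haarO d)
          (fun v : Matrix.orthogonalGroup (Fin d) ℝ => DeltaZ (fun j => -m j.rev)
            ((v : Matrix (Fin d) (Fin d) ℝ) * x * (v : Matrix (Fin d) (Fin d) ℝ)ᵀ)) r
end
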